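/- Let p be a pmf on the finite alphabet 𝒳={1,…,K} with p(x)>0 for all x, let p(y|x) be a channel with p(y|x)>0 for all x,y∈𝒳, and let f:𝒳→{1,…,M} be any encoder with cells A_z=f⁻¹(z). Then for every real α with 1<α<2, Σ_{x,y} p(x)·p(y|x)^α · ( Σ_{x'∈A_{f(x)}} p(x')p(y|x') )^{1−α} ≤ M^{α−1} · Σ_y ( Σ_x p(x)·p(y|x)^{1/(2−α)} )^{2−α}. -/

import Mathlib

open Finset

/-- Hölder inequality in product form: `∑ u^b v^c ≤ (∑ u)^b (∑ v)^c` for `b + c = 1`. -/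
lemma holder_aux {ι : Type*} (s : Finset ι) (u v : ι → ℝ)
    (hu : ∀ i ∈ s, 0 ≤ u i) (hv : ∀ i ∈ s, 0 ≤ v i) {b c : ℝ}
    (hb : 0 < b) (hc : 0 < c) (hbc : b + c = 1) :
    ∑ i ∈ s, u i ^ b * v i ^ c ≤ (∑ i ∈ s, u i) ^ b * (∑ i ∈ s, v i) ^ c := by
  have hb1 : b < 1 := by linarith
  have hc1 : c < 1 := by linarith
  have hpq : Real.HolderConjugate (1 / b) (1 / c) := by
    rw [Real.holderConjugate_iff]
    constructor
    · rw [lt_div_iff₀ hb, one_mul]; exact hb1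
    · rw [one_div, one_div, inv_inv, inv_inv]; exact hbc
  have key := Real.inner_le_Lp_mul_Lq_of_nonneg (s := s)
    (f := fun i => u i ^ b) (g := fun i => v i ^ c) hpq
    (fun i hi => Real.rpow_nonneg (hu i hi) _)
    (fun i hi => Real.rpow_nonneg (hv i hi) _)
  have h1 : ∀ i ∈ s, (u i ^ b) ^ (1 / b) = u i := fun i hi => by
    rw [← Real.rpow_mul (hu i hi), mul_one_div_cancel hb.ne', Real.rpow_one]
  have h2 : ∀ i ∈ s, (v i ^ c) ^ (1 / c) = v i := fun i hi => by
    rw [← Real.rpow_mul (hv i hi), mul_one_div_cancel hc.ne', Real.rpow_one]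
  rw [Finset.sum_congr rfl h1, Finset.sum_congr rfl h2, one_div_one_div, one_div_one_div] at key
  exact key

/-- Hölder upper bound on the generalized mutual information `I^Q(X;(Y,Z))` for
`Q(t) = t^{1-α}`, `1 < α < 2`, valid for every deterministic encoder `f`. -/
theorem stmt_6 (K M : ℕ) (hK : 0 < K) (hM : 0 < M)
    (p : Fin K → ℝ) (hp : ∀ x, 0 < p x) (hpsum : ∑ x, p x = 1)
    (W : Fin K → Fin K → ℝ) (hW : ∀ x y, 0 < W x y) (hWsum : ∀ x, ∑ y, W x y = 1)
    (f : Fin K → Fin M) (α : ℝ) (hα1 : 1 < α) (hα2 : α < 2) :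
    ∑ x, ∑ y, p x * (W x y) ^ α *
        (∑ x' ∈ Finset.univ.filter (fun x' => f x' = f x), p x' * W x' y) ^ (1 - α)
      ≤ (M:ℝ) ^ (α - 1) * ∑ y, (∑ x, p x * (W x y) ^ (1/(2-α))) ^ (2-α) := by
  have hβ : (0:ℝ) < α - 1 := by linarith
  have hγ : (0:ℝ) < 2 - α := by linarith
  rw [Finset.sum_comm, Finset.mul_sum]
  refine Finset.sum_le_sum fun y _ => ?_
  -- abbreviations for this fixed y
  set S : Fin M → ℝ := fun z => ∑ x' ∈ Finset.univ.filter (fun x' => f x' = z), p x' * W x' y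
    with hSdef
  set T : Fin M → ℝ := fun z =>
    ∑ x' ∈ Finset.univ.filter (fun x' => f x' = z), p x' * (W x' y) ^ (1/(2-α)) with hTdef
  have hTnonneg : ∀ z, 0 ≤ T z := fun z =>
    Finset.sum_nonneg fun x _ => mul_nonneg (hp x).le (Real.rpow_nonneg (hW x y).le _)
  -- group the sum over x by fibers of f
  have hgroup :
      ∑ x, p x * (W x y) ^ α *
        (∑ x' ∈ Finset.univ.filter (fun x' => f x' = f x), p x' * W x' y) ^ (1 - α)
      = ∑ z, ∑ x ∈ Finset.univ.filter (fun x => f x = z),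
          p x * (W x y) ^ α * (S z) ^ (1 - α) := by
    rw [← Finset.sum_fiberwise Finset.univ f]
    refine Finset.sum_congr rfl fun z _ => Finset.sum_congr rfl fun x hx => ?_
    rw [(Finset.mem_filter.mp hx).2]
  rw [hgroup]
  have step1 : ∀ z, ∑ x ∈ Finset.univ.filter (fun x => f x = z),
      p x * (W x y) ^ α * (S z) ^ (1 - α) ≤ (T z) ^ (2 - α) := by
    intro z
    by_cases hne : (Finset.univ.filter (fun x => f x = z)).Nonempty
    · have hS : 0 < S z :=
        Finset.sum_pos (fun x _ => mul_pos (hp x) (hW x y)) hne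
      have hhold : ∑ x ∈ Finset.univ.filter (fun x => f x = z), p x * (W x y) ^ α
          ≤ (S z) ^ (α - 1) * (T z) ^ (2 - α) := by
        have key := holder_aux (Finset.univ.filter (fun x => f x = z))
          (fun x => p x * W x y) (fun x => p x * (W x y) ^ (1/(2-α)))
          (fun x _ => mul_nonneg (hp x).le (hW x y).le)
          (fun x _ => mul_nonneg (hp x).le (Real.rpow_nonneg (hW x y).le _)) hβ hγ (by ring)
        have hpt : ∀ x, (p x * W x y) ^ (α - 1) * (p x * (W x y) ^ (1/(2-α))) ^ (2-α)
            = p x * (W x y) ^ α := by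
          intro x
          rw [Real.mul_rpow (hp x).le (hW x y).le,
            Real.mul_rpow (hp x).le (Real.rpow_nonneg (hW x y).le _),
            ← Real.rpow_mul (hW x y).le, one_div_mul_cancel hγ.ne', Real.rpow_one]
          have : p x ^ (α - 1) * W x y ^ (α - 1) * (p x ^ (2 - α) * W x y)
              = (p x ^ (α - 1) * p x ^ (2 - α)) * (W x y ^ (α - 1) * W x y ^ (1:ℝ)) := by
            rw [Real.rpow_one]; ring
          rw [this, ← Real.rpow_add (hp x), ← Real.rpow_add (hW x y)]
          norm_num
        calc ∑ x ∈ Finset.univ.filter (fun x => f x = z), p x * (W x y) ^ α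
            = ∑ x ∈ Finset.univ.filter (fun x => f x = z),
                (p x * W x y) ^ (α - 1) * (p x * (W x y) ^ (1/(2-α))) ^ (2-α) :=
              (Finset.sum_congr rfl fun x _ => (hpt x).symm)
          _ ≤ (S z) ^ (α - 1) * (T z) ^ (2 - α) := key
      calc ∑ x ∈ Finset.univ.filter (fun x => f x = z), p x * (W x y) ^ α * (S z) ^ (1 - α)
          = (∑ x ∈ Finset.univ.filter (fun x => f x = z), p x * (W x y) ^ α)
              * (S z) ^ (1 - α) := by rw [← Finset.sum_mul]
        _ ≤ ((S z) ^ (α - 1) * (T z) ^ (2 - α)) * (S z) ^ (1 - α) :=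
            mul_le_mul_of_nonneg_right hhold (Real.rpow_nonneg hS.le _)
        _ = ((S z) ^ (α - 1) * (S z) ^ (1 - α)) * (T z) ^ (2 - α) := by ring
        _ = (T z) ^ (2 - α) := by
            rw [← Real.rpow_add hS]
            norm_num
    · rw [Finset.not_nonempty_iff_eq_empty] at hne
      have hT0 : T z = 0 := by rw [hTdef]; simp [hne]
      rw [hne, hT0, Real.zero_rpow hγ.ne', Finset.sum_empty]
  calc ∑ z, ∑ x ∈ Finset.univ.filter (fun x => f x = z),
        p x * (W x y) ^ α * (S z) ^ (1 - α)
      ≤ ∑ z, (T z) ^ (2 - α) := Finset.sum_le_sum fun z _ => step1 z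
    _ = ∑ z, (1:ℝ) ^ (α - 1) * (T z) ^ (2 - α) := by simp [Real.one_rpow]
    _ ≤ (∑ _z : Fin M, (1:ℝ)) ^ (α - 1) * (∑ z, T z) ^ (2 - α) :=
        holder_aux Finset.univ (fun _ => (1:ℝ)) T (fun _ _ => zero_le_one)
          (fun z _ => hTnonneg z) hβ hγ (by ring)
    _ = (M:ℝ) ^ (α - 1) * (∑ x, p x * (W x y) ^ (1/(2-α))) ^ (2-α) := by
        rw [Finset.sum_const, Finset.card_univ, Fintype.card_fin, nsmul_eq_mul, mul_one]
        rw [hTdef, Finset.sum_fiberwise Finset.univ f]
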